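/- Let k, n be natural numbers with 1 ≤ k < n, let d := ⌊log₂(k+1)⌋, and assume n ≡ k (mod 2^d). Then: if 2^d ≤ k+1 < (3/2)·2^d, split(n,d) holds if and only if n ≡ k (mod 2^{d+1}); and if (3/2)·2^d ≤ k+1 < 2^{d+1}, split(n,d) holds if and only if n ≡ k (mod 2^{d+2}). That is, under the stated congruence there is a range split between the mountains containing the k-th and (k+1)-th newest leaves exactly under the finer congruence condition. -/

import Mathlib

/-- The `i`-th binary digit of `m`. -/
def bit (i m : ℕ) : ℕ := m / 2 ^ i % 2

/-- `Split n i` holds iff there is a range split between the mountains at positions `i`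
and `i−1` of the MMB structure on `n` leaves. -/
def Split (n i : ℕ) : Prop :=
  bit i (n + 1) = 1 ∧ (bit (i + 1) (n + 1) = 0 ∨ bit (i - 1) (n + 1) = 0)

lemma bit_congr {a b i j : ℕ} (hj : j < i) (h : a % 2 ^ i = b % 2 ^ i) :
    bit j a = bit j b := by
  have hdvd : (2 : ℕ) ^ (j + 1) ∣ 2 ^ i := pow_dvd_pow 2 hj
  unfold bit
  rw [← Nat.mod_mul_right_div_self a (2 ^ j) 2, ← Nat.mod_mul_right_div_self b (2 ^ j) 2,
    show (2 : ℕ) ^ j * 2 = 2 ^ (j + 1) by ring,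
    ← Nat.mod_mod_of_dvd a hdvd, ← Nat.mod_mod_of_dvd b hdvd, h]

lemma mod_pow_succ (m i : ℕ) : m % 2 ^ (i + 1) = m % 2 ^ i + 2 ^ i * bit i m := by
  rw [show (2 : ℕ) ^ (i + 1) = 2 ^ i * 2 by ring, Nat.mod_mul]; rfl

lemma mod_succ_iff {a b i : ℕ} :
    a % 2 ^ (i + 1) = b % 2 ^ (i + 1) ↔ a % 2 ^ i = b % 2 ^ i ∧ bit i a = bit i b := by
  have h1 := mod_pow_succ a i
  have h2 := mod_pow_succ b i
  have ha : a % 2 ^ i < 2 ^ i := Nat.mod_lt _ (Nat.pow_pos (by norm_num))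
  have hb : b % 2 ^ i < 2 ^ i := Nat.mod_lt _ (Nat.pow_pos (by norm_num))
  have hba : bit i a < 2 := Nat.mod_lt _ (by norm_num)
  have hbb : bit i b < 2 := Nat.mod_lt _ (by norm_num)
  constructor
  · intro h
    have hdvd : (2 : ℕ) ^ i ∣ 2 ^ (i + 1) := pow_dvd_pow 2 (Nat.le_succ i)
    constructor
    · rw [← Nat.mod_mod_of_dvd a hdvd, ← Nat.mod_mod_of_dvd b hdvd, h]
    · unfold bit
      rw [← Nat.mod_mul_right_div_self a (2 ^ i) 2, ← Nat.mod_mul_right_div_self b (2 ^ i) 2,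
        show (2:ℕ) ^ i * 2 = 2 ^ (i + 1) by ring, h]
  · rintro ⟨h3, h4⟩
    rw [h3, h4] at h1
    omega

theorem ummb_range_split_between (k n : ℕ) (hk : 1 ≤ k) (hkn : k < n)
    (d : ℕ) (hd : d = Nat.log 2 (k + 1)) (hmod : n ≡ k [MOD 2 ^ d]) :
    (2 ^ d ≤ k + 1 → 2 * (k + 1) < 3 * 2 ^ d →
      (Split n d ↔ n ≡ k [MOD 2 ^ (d + 1)])) ∧
    (3 * 2 ^ d ≤ 2 * (k + 1) → k + 1 < 2 ^ (d + 1) →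
      (Split n d ↔ n ≡ k [MOD 2 ^ (d + 2)])) := by
  have hpow1 : 2 ^ d ≤ k + 1 := hd ▸ Nat.pow_log_le_self 2 (by omega)
  have hpow2 : k + 1 < 2 ^ (d + 1) := hd ▸ Nat.lt_pow_succ_log_self (by norm_num) (k + 1)
  obtain ⟨e, rfl⟩ : ∃ e, d = e + 1 := by
    refine ⟨d - 1, ?_⟩
    rcases Nat.eq_zero_or_pos d with h | h
    · subst h; simp at hpow2; omega
    · omega
  -- power facts for omega
  have he : (0:ℕ) < 2 ^ e := Nat.pow_pos (by norm_num)
  have he1 : (2:ℕ) ^ (e + 1) = 2 * 2 ^ e := by ring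
  have hpow2' : k + 1 < 2 * 2 ^ (e + 1) := by rw [pow_succ] at hpow2; omega
  have hmod' : (n + 1) % 2 ^ (e + 1) = (k + 1) % 2 ^ (e + 1) := hmod.add_right 1
  have hkm : (k + 1) % 2 ^ (e + 1) = k + 1 - 2 ^ (e + 1) := by
    rw [Nat.mod_eq_sub_mod hpow1]
    exact Nat.mod_eq_of_lt (by omega)
  have hbk1 : bit (e + 1) (k + 1) = 1 := by
    have h1 : (k + 1) / 2 ^ (e + 1) = 1 := Nat.div_eq_of_lt_le (by omega) (by omega)
    unfold bit; rw [h1]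
  have hbk2 : bit (e + 1 + 1) (k + 1) = 0 := by
    have h1 : (k + 1) / 2 ^ (e + 1 + 1) = 0 := Nat.div_eq_of_lt (by rw [pow_succ]; omega)
    unfold bit; rw [h1]
  have hbite : ∀ m : ℕ, bit e m = m % 2 ^ (e + 1) / 2 ^ e := by
    intro m
    unfold bit
    rw [← Nat.mod_mul_right_div_self m (2 ^ e) 2, show (2:ℕ) ^ e * 2 = 2 ^ (e + 1) by ring]
  have hbne : bit e (n + 1) = bit e (k + 1) := bit_congr (Nat.lt_succ_self e) hmod'
  have hiff1 : (n ≡ k [MOD 2 ^ (e + 1 + 1)]) ↔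
      (n + 1) % 2 ^ (e + 1 + 1) = (k + 1) % 2 ^ (e + 1 + 1) :=
    ⟨fun h => h.add_right 1, fun h => Nat.ModEq.add_right_cancel' 1 h⟩
  have hiff2 : (n ≡ k [MOD 2 ^ (e + 1 + 1 + 1)]) ↔
      (n + 1) % 2 ^ (e + 1 + 1 + 1) = (k + 1) % 2 ^ (e + 1 + 1 + 1) :=
    ⟨fun h => h.add_right 1, fun h => Nat.ModEq.add_right_cancel' 1 h⟩
  constructor
  · intro _ hcase
    have hbk0 : bit e (k + 1) = 0 := by
      rw [hbite, hkm, Nat.div_eq_of_lt (by omega)]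
    have hsplit : Split n (e + 1) ↔ bit (e + 1) (n + 1) = 1 := by
      unfold Split
      simp only [Nat.add_sub_cancel]
      rw [hbne, hbk0]
      omega
    rw [hsplit, hiff1, mod_succ_iff, hbk1]
    simp [hmod']
  · intro hcase _
    have hbk0 : bit e (k + 1) = 1 := by
      have h1 : (k + 1 - 2 ^ (e + 1)) / 2 ^ e = 1 := Nat.div_eq_of_lt_le (by omega) (by omega)
      rw [hbite, hkm, h1]
    have hsplit : Split n (e + 1) ↔
        (bit (e + 1) (n + 1) = 1 ∧ bit (e + 1 + 1) (n + 1) = 0) := by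
      unfold Split
      simp only [Nat.add_sub_cancel]
      rw [hbne, hbk0]
      omega
    rw [show e + 1 + 2 = e + 1 + 1 + 1 by omega]
    rw [hsplit]
    rw [hiff2]
    rw [mod_succ_iff]
    rw [mod_succ_iff]
    rw [hbk1, hbk2]
    constructor
    · rintro ⟨h1, h2⟩; exact ⟨⟨hmod', h1⟩, h2⟩
    · rintro ⟨⟨_, h1⟩, h2⟩; exact ⟨h1, h2⟩
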